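/- Suppose θ : [0,∞) → U ⊆ ℝᵐ solves θ' = −2 J(θ)ᵀ (g(θ) − Y), where g : ℝᵐ → ℝⁿ is C¹ with Jacobian J, and on U all singular values of J(θ) lie in [c, C] with 0 < c ≤ C. Then ‖g(θ(t)) − Y‖ ≤ ‖g(θ(0)) − Y‖ e^{−2c²t}, ‖θ'(t)‖ ≤ 2C‖g(θ(0)) − Y‖ e^{−2c²t}, the limit θ* = lim_{t→∞} θ(t) exists, and g(θ*) = Y. -/

import Mathlib

open Filter MeasureTheory Set Real Topology


open Filter

set_option maxHeartbeats 1600000 in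
/-- Gradient flow `θ' = −2 J(θ)ᵀ (g(θ) − Y)` for the squared-error loss, under
uniform Jacobian conditioning `c ≤ σ_min(J(θ))`, `σ_max(J(θ)) ≤ C` on a set `U` containing
the trajectory, satisfies `‖g(θ(t)) − Y‖ ≤ ‖g(θ(0)) − Y‖ e^{−2c²t}`,
`‖θ'(t)‖ ≤ 2C ‖g(θ(0)) − Y‖ e^{−2c²t}`, and `θ(t)` converges to an interpolator `θ*`. -/
theorem stmt8 (m n : ℕ) (c C : ℝ) (hc : 0 < c) (hcC : c ≤ C)
    (g : EuclideanSpace ℝ (Fin m) → EuclideanSpace ℝ (Fin n)) (hg : ContDiff ℝ 1 g)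
    (U : Set (EuclideanSpace ℝ (Fin m))) (Y : EuclideanSpace ℝ (Fin n))
    (hσmin : ∀ x ∈ U, ∀ v : EuclideanSpace ℝ (Fin n),
      c * ‖v‖ ≤ ‖ContinuousLinearMap.adjoint (fderiv ℝ g x) v‖)
    (hσmax : ∀ x ∈ U, ∀ u : EuclideanSpace ℝ (Fin m), ‖fderiv ℝ g x u‖ ≤ C * ‖u‖)
    (θ : ℝ → EuclideanSpace ℝ (Fin m)) (hmem : ∀ t ≥ (0:ℝ), θ t ∈ U)
    (hode : ∀ t ≥ (0:ℝ), HasDerivAt θ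
      ((-2 : ℝ) • ContinuousLinearMap.adjoint (fderiv ℝ g (θ t)) (g (θ t) - Y)) t) :
    (∀ t ≥ (0:ℝ), ‖g (θ t) - Y‖ ≤ ‖g (θ 0) - Y‖ * Real.exp (-(2 * c ^ 2) * t)) ∧
    (∀ t ≥ (0:ℝ), ‖deriv θ t‖ ≤ 2 * C * ‖g (θ 0) - Y‖ * Real.exp (-(2 * c ^ 2) * t)) ∧
    ∃ θstar : EuclideanSpace ℝ (Fin m),
      Tendsto θ atTop (nhds θstar) ∧ g θstar = Y := by
  have hC0 : (0:ℝ) < C := lt_of_lt_of_le hc hcC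
  set a : ℝ := 2 * c ^ 2 with ha
  have ha0 : (0:ℝ) < a := by positivity
  set r : ℝ → EuclideanSpace ℝ (Fin n) := fun t => g (θ t) - Y with hrdef
  set d : ℝ → EuclideanSpace ℝ (Fin m) :=
    fun t => (-2 : ℝ) • ContinuousLinearMap.adjoint (fderiv ℝ g (θ t)) (r t) with hddef
  have hθ' : ∀ t ≥ (0:ℝ), HasDerivAt θ (d t) t := hode
  have hgd : Differentiable ℝ g := hg.differentiable one_ne_zero
  have hr' : ∀ t ≥ (0:ℝ), HasDerivAt r (fderiv ℝ g (θ t) (d t)) t := fun t ht =>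
    ((hgd (θ t)).hasFDerivAt.comp_hasDerivAt t (hθ' t ht)).sub_const Y
  -- q = squared norm of residual
  set q : ℝ → ℝ := fun t => (inner ℝ (r t) (r t) : ℝ) with hqdef
  have hq' : ∀ t ≥ (0:ℝ), HasDerivAt q
      ((inner ℝ (r t) (fderiv ℝ g (θ t) (d t)) : ℝ) +
        (inner ℝ (fderiv ℝ g (θ t) (d t)) (r t) : ℝ)) t := fun t ht =>
    HasDerivAt.inner ℝ (hr' t ht) (hr' t ht)
  have hqnorm : ∀ t, q t = ‖r t‖ ^ 2 := fun t => real_inner_self_eq_norm_sq _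
  -- key derivative bound
  have hkey : ∀ t ≥ (0:ℝ),
      (inner ℝ (r t) (fderiv ℝ g (θ t) (d t)) : ℝ) +
        (inner ℝ (fderiv ℝ g (θ t) (d t)) (r t) : ℝ) ≤ -(2 * a) * q t := by
    intro t ht
    set J := fderiv ℝ g (θ t) with hJ
    set w := ContinuousLinearMap.adjoint J (r t) with hw
    have h1 : (inner ℝ (fderiv ℝ g (θ t) (d t)) (r t) : ℝ) = (-2 : ℝ) * ‖w‖ ^ 2 := by
      have : J (d t) = (-2 : ℝ) • J w := by simp [hddef, hw]; rfl
      rw [← hJ]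
      rw [this, real_inner_smul_left]
      congr 1
      rw [← real_inner_self_eq_norm_sq]
      rw [hw, ContinuousLinearMap.adjoint_inner_right]
    have h2 : (inner ℝ (r t) (fderiv ℝ g (θ t) (d t)) : ℝ) = (-2 : ℝ) * ‖w‖ ^ 2 := by
      rw [real_inner_comm]; exact h1
    rw [h1, h2, hqnorm]
    have hwlb : c * ‖r t‖ ≤ ‖w‖ := hσmin (θ t) (hmem t ht) (r t)
    have hsq : (c * ‖r t‖) ^ 2 ≤ ‖w‖ ^ 2 := by
      apply pow_le_pow_left₀ (by positivity) hwlb _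
    nlinarith [norm_nonneg (r t), norm_nonneg w]
  -- φ = q t * exp (2 a t) is antitone on [0, ∞)
  set φ : ℝ → ℝ := fun t => q t * Real.exp (2 * a * t) with hφdef
  have hexp' : ∀ t : ℝ, HasDerivAt (fun s => Real.exp (2 * a * s))
      (Real.exp (2 * a * t) * (2 * a)) t := by
    intro t
    simpa using ((hasDerivAt_id t).const_mul (2 * a)).exp
  have hφ' : ∀ t ≥ (0:ℝ), HasDerivAt φ
      (((inner ℝ (r t) (fderiv ℝ g (θ t) (d t)) : ℝ) +
        (inner ℝ (fderiv ℝ g (θ t) (d t)) (r t) : ℝ)) * Real.exp (2 * a * t) +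
        q t * (Real.exp (2 * a * t) * (2 * a))) t := fun t ht =>
    (hq' t ht).mul (hexp' t)
  have hφanti : AntitoneOn φ (Ici 0) := by
    apply antitoneOn_of_deriv_nonpos (convex_Ici 0)
    · intro t ht
      exact (hφ' t ht).continuousAt.continuousWithinAt
    · intro t ht
      rw [interior_Ici] at ht
      exact (hφ' t ht.le).differentiableAt.differentiableWithinAt
    · intro t ht
      rw [interior_Ici] at ht
      rw [(hφ' t ht.le).deriv]
      have hk := hkey t ht.le
      have hE : (0:ℝ) < Real.exp (2 * a * t) := Real.exp_pos _
      nlinarith [hk, hE]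
  -- first bound
  have hbound1 : ∀ t ≥ (0:ℝ), ‖r t‖ ≤ ‖r 0‖ * Real.exp (-a * t) := by
    intro t ht
    have h := hφanti (self_mem_Ici) ht ht
    simp only [hφdef] at h
    rw [mul_zero, Real.exp_zero, mul_one] at h
    have hE : (0:ℝ) < Real.exp (2 * a * t) := Real.exp_pos _
    have hq2 : q t ≤ q 0 * Real.exp (-(2*a) * t) := by
      have h2 : q t ≤ q 0 / Real.exp (2 * a * t) := (le_div_iff₀ hE).mpr h
      calc q t ≤ q 0 / Real.exp (2 * a * t) := h2
        _ = q 0 * Real.exp (-(2*a) * t) := by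
            rw [div_eq_mul_inv, ← Real.exp_neg]; ring_nf
    have hsq : ‖r t‖ ^ 2 ≤ (‖r 0‖ * Real.exp (-a * t)) ^ 2 := by
      rw [← hqnorm]
      calc q t ≤ q 0 * Real.exp (-(2*a) * t) := hq2
        _ = (‖r 0‖ * Real.exp (-a * t)) ^ 2 := by
            rw [hqnorm, mul_pow, sq (Real.exp (-a * t)), ← Real.exp_add]
            congr 2; ring
    exact (pow_le_pow_iff_left₀ (norm_nonneg _) (by positivity) two_ne_zero).mp hsq
  -- bound on d
  have hdbound : ∀ t ≥ (0:ℝ), ‖d t‖ ≤ 2 * C * ‖r 0‖ * Real.exp (-a * t) := by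
    intro t ht
    have hJle : ‖fderiv ℝ g (θ t)‖ ≤ C :=
      ContinuousLinearMap.opNorm_le_bound _ hC0.le (hσmax (θ t) (hmem t ht))
    have hAle : ‖ContinuousLinearMap.adjoint (fderiv ℝ g (θ t)) (r t)‖ ≤ C * ‖r t‖ := by
      calc ‖ContinuousLinearMap.adjoint (fderiv ℝ g (θ t)) (r t)‖
          ≤ ‖ContinuousLinearMap.adjoint (fderiv ℝ g (θ t))‖ * ‖r t‖ :=
            ContinuousLinearMap.le_opNorm _ _
        _ ≤ C * ‖r t‖ := by
            apply mul_le_mul_of_nonneg_right _ (norm_nonneg _)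
            rw [LinearIsometryEquiv.norm_map]
            exact hJle
    have : ‖d t‖ = 2 * ‖ContinuousLinearMap.adjoint (fderiv ℝ g (θ t)) (r t)‖ := by
      rw [hddef]; simp [norm_smul]
    rw [this]
    have := hbound1 t ht
    nlinarith [norm_nonneg (r t), Real.exp_pos (-a * t), norm_nonneg (r 0)]
  -- continuity of d on Ici 0
  have hθc : ContinuousOn θ (Ici 0) := fun t ht =>
    (hθ' t ht).continuousAt.continuousWithinAt
  have hAc : ContinuousOn (fun t => ContinuousLinearMap.adjoint (fderiv ℝ g (θ t))) (Ici 0) :=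
    ((ContinuousLinearMap.adjoint :
        (EuclideanSpace ℝ (Fin m) →L[ℝ] EuclideanSpace ℝ (Fin n)) ≃ₗᵢ⋆[ℝ] _).continuous.comp
      (hg.continuous_fderiv one_ne_zero)).comp_continuousOn hθc
  have hrc : ContinuousOn r (Ici 0) :=
    (hgd.continuous.comp_continuousOn hθc).sub continuousOn_const
  have hdc : ContinuousOn d (Ici 0) := (hAc.clm_apply hrc).const_smul (-2 : ℝ)
  -- integrability of d on Ioi 0
  have hInt : IntegrableOn d (Ioi 0) := by
    apply Integrable.mono' ((exp_neg_integrableOn_Ioi 0 ha0).const_mul (2 * C * ‖r 0‖))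
    · exact (hdc.mono Ioi_subset_Ici_self).aestronglyMeasurable measurableSet_Ioi
    · rw [ae_restrict_iff' measurableSet_Ioi]
      filter_upwards with t ht
      exact hdbound t ht.le
  -- FTC
  have hFTC : ∀ t ≥ (0:ℝ), θ t = θ 0 + ∫ τ in (0:ℝ)..t, d τ := by
    intro t ht
    have huIcc : uIcc (0:ℝ) t = Icc 0 t := uIcc_of_le ht
    have h1 : ∫ τ in (0:ℝ)..t, d τ = θ t - θ 0 := by
      apply intervalIntegral.integral_eq_sub_of_hasDerivAt
      · intro x hx
        rw [huIcc] at hx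
        exact hθ' x hx.1
      · apply (hdc.mono _).intervalIntegrable
        rw [huIcc]; exact fun x hx => hx.1
    rw [h1]; abel
  -- convergence
  have htend : Tendsto θ atTop (nhds (θ 0 + ∫ τ in Ioi (0:ℝ), d τ)) := by
    have h1 : Tendsto (fun t => ∫ τ in (0:ℝ)..t, d τ) atTop
        (nhds (∫ τ in Ioi (0:ℝ), d τ)) :=
      intervalIntegral_tendsto_integral_Ioi 0 hInt tendsto_id
    have h2 : Tendsto (fun t => θ 0 + ∫ τ in (0:ℝ)..t, d τ) atTop
        (nhds (θ 0 + ∫ τ in Ioi (0:ℝ), d τ)) := tendsto_const_nhds.add h1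
    apply h2.congr'
    filter_upwards [eventually_ge_atTop (0:ℝ)] with t ht
    exact (hFTC t ht).symm
  -- the residual tends to 0
  have hrtend : Tendsto r atTop (nhds 0) := by
    apply squeeze_zero_norm' 
    · filter_upwards [eventually_ge_atTop (0:ℝ)] with t ht
      exact hbound1 t ht
    · have hexp : Tendsto (fun t : ℝ => Real.exp (-a * t)) atTop (nhds 0) :=
        Real.tendsto_exp_atBot.comp
          (tendsto_id.const_mul_atTop_of_neg (neg_lt_zero.mpr ha0))
      simpa using hexp.const_mul (‖r 0‖)
  refine ⟨hbound1, ?_, θ 0 + ∫ τ in Ioi (0:ℝ), d τ, htend, ?_⟩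
  · intro t ht
    rw [(hθ' t ht).deriv]
    have := hdbound t ht
    calc ‖d t‖ ≤ 2 * C * ‖r 0‖ * Real.exp (-a * t) := this
      _ = 2 * C * ‖g (θ 0) - Y‖ * Real.exp (-(2 * c ^ 2) * t) := by rw [hrdef]
  · have h1 : Tendsto (fun t => g (θ t)) atTop (nhds (g (θ 0 + ∫ τ in Ioi (0:ℝ), d τ))) :=
      (hgd.continuous.tendsto _).comp htend
    have h2 : Tendsto (fun t => g (θ t)) atTop (nhds Y) := by
      have := hrtend.add_const Y
      simpa [hrdef] using this
    exact tendsto_nhds_unique h1 h2
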